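/- If K is a perfect Baire space, then the map P_c : CD_ω(K) → C_b(K) sending each f to the unique bounded continuous g with [f ≠ g] at most countable is a well-defined linear lattice homomorphism, a projection onto C_b(K), and bounded with norm at most 1 for the sup norm. -/

import Mathlib

/-- f is a bounded real function (member of B(K)). -/
def Bdd {K : Type*} (f : K → ℝ) : Prop := ∃ C : ℝ, ∀ x, |f x| ≤ C

/-- The space CD_ω(K). -/
def CDomega (K : Type*) [TopologicalSpace K] : Set (K → ℝ) :=
  {f | Bdd f ∧ ∃ g : K → ℝ, Continuous g ∧ Bdd g ∧ {x | f x ≠ g x}.Countable}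

lemma dense_compl_of_countable {K : Type*} [TopologicalSpace K] [T2Space K] [BaireSpace K]
    (hperfect : ∀ x : K, ¬ IsOpen ({x} : Set K)) {S : Set K} (hS : S.Countable) :
    Dense Sᶜ := by
  have : Sᶜ = ⋂ x ∈ S, ({x}ᶜ : Set K) := by
    ext y
    simp only [Set.mem_compl_iff, Set.mem_iInter, Set.mem_compl_iff, Set.mem_singleton_iff]
    exact ⟨fun h i hi he => h (he ▸ hi), fun h hy => h y hy rfl⟩
  rw [this]
  exact dense_biInter_of_isOpen (fun x _ => isOpen_compl_singleton) hS
    (fun x _ => dense_compl_singleton_iff_not_open.2 (hperfect x))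

/-- Two continuous functions differing from the same f on countable sets are equal. -/
lemma cont_unique {K : Type*} [TopologicalSpace K] [T2Space K] [BaireSpace K]
    (hperfect : ∀ x : K, ¬ IsOpen ({x} : Set K)) {f g₁ g₂ : K → ℝ}
    (hc₁ : Continuous g₁) (hc₂ : Continuous g₂)
    (h₁ : {x | f x ≠ g₁ x}.Countable) (h₂ : {x | f x ≠ g₂ x}.Countable) :
    g₁ = g₂ := by
  have hd : Dense ({x | f x ≠ g₁ x} ∪ {x | f x ≠ g₂ x})ᶜ :=
    dense_compl_of_countable hperfect (h₁.union h₂)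
  refine Continuous.ext_on hd hc₁ hc₂ fun x hx => ?_
  simp only [Set.mem_compl_iff, Set.mem_union, Set.mem_setOf_eq, not_or, not_not] at hx
  rw [← hx.1, ← hx.2]

theorem stmt5 {K : Type*} [TopologicalSpace K] [T2Space K] [BaireSpace K]
    (hperfect : ∀ x : K, ¬ IsOpen ({x} : Set K)) :
    -- well-definedness: existence and uniqueness of the continuous representative
    (∀ f ∈ CDomega K, ∃! g : K → ℝ, Continuous g ∧ Bdd g ∧ {x | f x ≠ g x}.Countable) ∧
    -- and for any map P realizing this assignment:
    ∀ P : (K → ℝ) → (K → ℝ),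
      (∀ f ∈ CDomega K, Continuous (P f) ∧ Bdd (P f) ∧ {x | f x ≠ P f x}.Countable) →
      -- linearity
      (∀ f ∈ CDomega K, ∀ g ∈ CDomega K, P (f + g) = P f + P g) ∧
      (∀ (c : ℝ), ∀ f ∈ CDomega K, P (c • f) = c • P f) ∧
      -- lattice homomorphism
      (∀ f ∈ CDomega K, ∀ g ∈ CDomega K, P (f ⊔ g) = P f ⊔ P g) ∧
      -- projection onto C_b(K)
      (∀ f ∈ CDomega K, Continuous f → P f = f) ∧
      (∀ f ∈ CDomega K, P f ∈ CDomega K ∧ P (P f) = P f) ∧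
      -- bounded with norm at most 1 for the sup norm
      (∀ f ∈ CDomega K, ∀ C : ℝ, (∀ x, |f x| ≤ C) → ∀ x, |P f x| ≤ C) := by
  constructor
  · rintro f ⟨hb, g, hgc, hgb, hgcount⟩
    exact ⟨g, ⟨hgc, hgb, hgcount⟩, fun g' ⟨hg'c, hg'b, hg'count⟩ =>
      cont_unique hperfect hg'c hgc hg'count hgcount⟩
  · intro P hP
    -- helper: membership lemmas
    have mem_add : ∀ f ∈ CDomega K, ∀ g ∈ CDomega K, f + g ∈ CDomega K := by
      intro f hf g hg
      obtain ⟨C, hC⟩ := hf.1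
      obtain ⟨D, hD⟩ := hg.1
      have hf := hP f hf; have hg := hP g hg
      obtain ⟨C', hC'⟩ := hf.2.1
      obtain ⟨D', hD''⟩ := hg.2.1
      refine ⟨⟨C + D, fun x => (abs_add_le _ _).trans (add_le_add (hC x) (hD x))⟩,
        P f + P g, hf.1.add hg.1, ⟨C' + D', fun x =>
          (abs_add_le _ _).trans (add_le_add (hC' x) (hD'' x))⟩, ?_⟩
      refine Set.Countable.mono ?_ (hf.2.2.union hg.2.2)
      intro x hx
      by_contra hc
      simp only [Set.mem_union, Set.mem_setOf_eq, not_or, not_not] at hc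
      exact hx (by simp [Pi.add_apply, hc.1, hc.2])
    have mem_smul : ∀ (c : ℝ), ∀ f ∈ CDomega K, c • f ∈ CDomega K := by
      intro c f hf
      obtain ⟨C, hC⟩ := hf.1
      have hPf := hP f hf
      obtain ⟨C', hC'⟩ := hPf.2.1
      refine ⟨⟨|c| * C, fun x => by
        simp only [Pi.smul_apply, smul_eq_mul, abs_mul]
        exact mul_le_mul_of_nonneg_left (hC x) (abs_nonneg c)⟩,
        c • P f, hPf.1.const_smul c, ⟨|c| * C', fun x => by
          simp only [Pi.smul_apply, smul_eq_mul, abs_mul]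
          exact mul_le_mul_of_nonneg_left (hC' x) (abs_nonneg c)⟩, ?_⟩
      refine Set.Countable.mono ?_ hPf.2.2
      intro x hx
      by_contra hc
      simp only [Set.mem_setOf_eq, not_not] at hc
      exact hx (by simp [Pi.smul_apply, hc])
    have mem_sup : ∀ f ∈ CDomega K, ∀ g ∈ CDomega K, f ⊔ g ∈ CDomega K := by
      intro f hf g hg
      obtain ⟨C, hC⟩ := hf.1
      obtain ⟨D, hD⟩ := hg.1
      have hPf := hP f hf; have hPg := hP g hg
      obtain ⟨C', hC'⟩ := hPf.2.1
      obtain ⟨D', hD'⟩ := hPg.2.1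
      have habs : ∀ (a b : ℝ) (Ca Cb : ℝ), |a| ≤ Ca → |b| ≤ Cb → |a ⊔ b| ≤ Ca + Cb := by
        intro a b Ca Cb ha hb
        rcases le_total a b with h | h
        · simp only [sup_of_le_right h]
          calc |b| ≤ Cb := hb
            _ ≤ Ca + Cb := le_add_of_nonneg_left ((abs_nonneg a).trans ha)
        · simp only [sup_of_le_left h]
          calc |a| ≤ Ca := ha
            _ ≤ Ca + Cb := le_add_of_nonneg_right ((abs_nonneg b).trans hb)
      refine ⟨⟨C + D, fun x => habs _ _ _ _ (hC x) (hD x)⟩,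
        P f ⊔ P g, hPf.1.max hPg.1, ⟨C' + D', fun x => habs _ _ _ _ (hC' x) (hD' x)⟩, ?_⟩
      refine Set.Countable.mono ?_ (hPf.2.2.union hPg.2.2)
      intro x hx
      by_contra hc
      simp only [Set.mem_union, Set.mem_setOf_eq, not_or, not_not] at hc
      exact hx (by simp [Pi.sup_apply, hc.1, hc.2])
    refine ⟨?_, ?_, ?_, ?_, ?_, ?_⟩
    · intro f hf g hg
      have hsum := hP (f + g) (mem_add f hf g hg)
      have hf' := hP f hf; have hg' := hP g hg
      refine cont_unique hperfect hsum.1 (hf'.1.add hg'.1) hsum.2.2 ?_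
      refine Set.Countable.mono ?_ (hf'.2.2.union hg'.2.2)
      intro x hx
      by_contra hc
      simp only [Set.mem_union, Set.mem_setOf_eq, not_or, not_not] at hc
      exact hx (by simp [Pi.add_apply, hc.1, hc.2])
    · intro c f hf
      have hcf := hP (c • f) (mem_smul c f hf)
      have hf' := hP f hf
      refine cont_unique hperfect hcf.1 (hf'.1.const_smul c) hcf.2.2 ?_
      refine Set.Countable.mono ?_ hf'.2.2
      intro x hx
      by_contra hc
      simp only [Set.mem_setOf_eq, not_not] at hc
      exact hx (by simp [Pi.smul_apply, hc])
    · intro f hf g hg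
      have hs := hP (f ⊔ g) (mem_sup f hf g hg)
      have hf' := hP f hf; have hg' := hP g hg
      refine cont_unique hperfect hs.1 (hf'.1.max hg'.1) hs.2.2 ?_
      refine Set.Countable.mono ?_ (hf'.2.2.union hg'.2.2)
      intro x hx
      by_contra hc
      simp only [Set.mem_union, Set.mem_setOf_eq, not_or, not_not] at hc
      exact hx (by simp [Pi.sup_apply, hc.1, hc.2])
    · intro f hf hc
      have hPf := hP f hf
      exact cont_unique hperfect hPf.1 hc hPf.2.2 (by simp)
    · intro f hf
      have hPf := hP f hf
      have hmem : P f ∈ CDomega K :=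
        ⟨hPf.2.1, P f, hPf.1, hPf.2.1, by simp⟩
      refine ⟨hmem, ?_⟩
      have hPPf := hP (P f) hmem
      exact cont_unique hperfect hPPf.1 hPf.1 hPPf.2.2 (by simp)
    · intro f hf C hC x
      have hPf := hP f hf
      have hd : Dense {x | f x ≠ P f x}ᶜ := dense_compl_of_countable hperfect hPf.2.2
      have hclosed : IsClosed {y : K | |P f y| ≤ C} :=
        isClosed_le (continuous_abs.comp hPf.1) continuous_const
      have hsub : {x | f x ≠ P f x}ᶜ ⊆ {y : K | |P f y| ≤ C} := by
        intro y hy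
        simp only [Set.mem_compl_iff, Set.mem_setOf_eq, not_not] at hy
        simpa [← hy] using hC y
      have : closure {x | f x ≠ P f x}ᶜ ⊆ {y : K | |P f y| ≤ C} :=
        hclosed.closure_subset_iff.2 hsub
      have := this (hd x)
      exact this
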